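/- For all natural numbers r with 2r ≤ n, the r-th y-derivative satisfies ∂_y^r H_n(x,y|λ) = (n!/(n-2r)!) · (log(1+λ)/λ)^r · H_{n-2r}(x,y|λ). -/

import Mathlib

open Real Finset MeasureTheory

noncomputable def dH (l x y : ℝ) (n : ℕ) : ℝ :=
  ∑ k ∈ Finset.range (n / 2 + 1),
    (Nat.factorial n : ℝ) / ((Nat.factorial (n - 2 * k) : ℝ) * (Nat.factorial k : ℝ)) *
      (Real.log (1 + l) / l) ^ (n - k) * x ^ (n - 2 * k) * y ^ k

lemma hasDerivAt_dH (l x y : ℝ) (m : ℕ) :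
    HasDerivAt (fun y' => dH l x y' m)
      (∑ k ∈ Finset.range (m / 2 + 1),
        (Nat.factorial m : ℝ) / ((Nat.factorial (m - 2 * k) : ℝ) * (Nat.factorial k : ℝ)) *
          (Real.log (1 + l) / l) ^ (m - k) * x ^ (m - 2 * k) * ((k : ℝ) * y ^ (k - 1))) y := by
  unfold dH
  apply HasDerivAt.fun_sum
  intro k _
  exact (hasDerivAt_pow k y).const_mul _

lemma fact_cast (m : ℕ) (hm : 2 ≤ m) :
    (Nat.factorial m : ℝ) = (m : ℝ) * ((m : ℝ) - 1) * (Nat.factorial (m - 2) : ℝ) := by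
  obtain ⟨p, rfl⟩ : ∃ p, m = p + 2 := ⟨m - 2, by omega⟩
  simp [Nat.factorial]
  ring

lemma deriv_dH (l x y : ℝ) (m : ℕ) (hm : 2 ≤ m) :
    deriv (fun y' => dH l x y' m) y =
      (m : ℝ) * ((m : ℝ) - 1) * (Real.log (1 + l) / l) * dH l x y (m - 2) := by
  rw [(hasDerivAt_dH l x y m).deriv]
  set c := Real.log (1 + l) / l with hc
  rw [Finset.sum_range_succ']
  simp only [Nat.cast_zero, zero_mul, mul_zero, add_zero]
  unfold dH
  rw [← hc]
  have hrange : (m - 2) / 2 + 1 = m / 2 := by omega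
  rw [hrange, Finset.mul_sum]
  apply Finset.sum_congr rfl
  intro j hj
  have hj2 : 2 * (j + 1) ≤ m := by
    have := Finset.mem_range.mp hj
    omega
  have e1 : m - 2 * (j + 1) = m - 2 - 2 * j := by omega
  have e2 : m - (j + 1) = (m - 2 - j) + 1 := by omega
  have e3 : j + 1 - 1 = j := by omega
  rw [e1, e2, e3, Nat.factorial_succ, fact_cast m hm]
  have h1 : ((m - 2 - 2 * j).factorial : ℝ) ≠ 0 := Nat.cast_ne_zero.mpr (Nat.factorial_ne_zero _)
  have h2 : (j.factorial : ℝ) ≠ 0 := Nat.cast_ne_zero.mpr (Nat.factorial_ne_zero _)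
  have h3 : ((j : ℝ) + 1) ≠ 0 := by positivity
  push_cast
  field_simp
  ring

lemma stmt4_aux (l x : ℝ) (hl0 : l ≠ 0) (n : ℕ) : ∀ r : ℕ, 2 * r ≤ n → ∀ y : ℝ,
    iteratedDeriv r (fun y' => dH l x y' n) y =
      ((Nat.factorial n : ℝ) / (Nat.factorial (n - 2 * r) : ℝ)) *
        (Real.log (1 + l) / l) ^ r * dH l x y (n - 2 * r) := by
  intro r
  induction r with
  | zero =>
    intro _ y
    have hne : (Nat.factorial n : ℝ) ≠ 0 := Nat.cast_ne_zero.mpr (Nat.factorial_ne_zero n)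
    simp [iteratedDeriv_zero, div_self hne]
  | succ r ih =>
    intro hr y
    have hr' : 2 * r ≤ n := by omega
    rw [iteratedDeriv_succ]
    have hfun : iteratedDeriv r (fun y' => dH l x y' n) =
        fun y' => ((Nat.factorial n : ℝ) / (Nat.factorial (n - 2 * r) : ℝ)) *
          (Real.log (1 + l) / l) ^ r * dH l x y' (n - 2 * r) := funext (ih hr')
    rw [hfun]
    have hdiff : ∀ y' : ℝ, DifferentiableAt ℝ (fun y'' => dH l x y'' (n - 2 * r)) y' :=
      fun y' => (hasDerivAt_dH l x y' (n - 2 * r)).differentiableAt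
    rw [deriv_const_mul _ (hdiff y), deriv_dH l x y (n - 2 * r) (by omega)]
    have e1 : n - 2 * r - 2 = n - 2 * (r + 1) := by omega
    rw [e1, fact_cast (n - 2 * r) (by omega), e1]
    set M : ℝ := ((n - 2 * r : ℕ) : ℝ) with hM
    set F : ℝ := ((Nat.factorial (n - 2 * (r + 1)) : ℕ) : ℝ) with hF
    have hm1 : (1 : ℝ) ≤ ((n - 2 * r : ℕ) : ℝ) := by
      have : 1 ≤ n - 2 * r := by omega
      exact_mod_cast this
    have h1 : ((n - 2 * (r + 1)).factorial : ℝ) ≠ 0 := Nat.cast_ne_zero.mpr (Nat.factorial_ne_zero _)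
    have h2 : ((n - 2 * r : ℕ) : ℝ) ≠ 0 := by linarith
    have h3 : ((n - 2 * r : ℕ) : ℝ) - 1 ≠ 0 := by
      have : 2 ≤ n - 2 * r := by omega
      have : (2 : ℝ) ≤ ((n - 2 * r : ℕ) : ℝ) := by exact_mod_cast this
      linarith
    clear_value M F
    subst hM hF
    field_simp [hl0]
    have hll : l * l⁻¹ = 1 := mul_inv_cancel₀ hl0
    linear_combination (-(Real.log (1 + l) * Real.log (1 + l) ^ r * l⁻¹ ^ r * dH l x y (n - 2 * (r + 1)))) * hll

theorem stmt4 (l : ℝ) (hl : 0 < l) (n r : ℕ) (hr : 2 * r ≤ n) (x y : ℝ) :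
    iteratedDeriv r (fun y' => dH l x y' n) y =
      ((Nat.factorial n : ℝ) / (Nat.factorial (n - 2 * r) : ℝ)) *
        (Real.log (1 + l) / l) ^ r * dH l x y (n - 2 * r) := by
  exact stmt4_aux l x (ne_of_gt hl) n r hr y
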